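/- Let W^{xy} (x,y ∈ {0,1}) be probability distributions on {0,1}^n × {0,1}^n with uniform marginals, and suppose for all Boolean functions f,g : {0,1}^n → {0,1} with |f⁻¹(1)| = k, |g⁻¹(1)| = l we have δ⁻(k,l) ≤ f^T W^{xy} g ≤ δ⁺(k,l) for given functions δ^± : {0,…,2^n}² → ℝ. Then the CHSH value of any protocol using these wirings satisfies |⟨f₀,g₀⟩+⟨f₀,g₁⟩+⟨f₁,g₀⟩-⟨f₁,g₁⟩| ≤ max over k⁰,k¹,l⁰,l¹ ∈ {0,…,2^n} of [2 - (k⁰+l⁰)/2^{n-2} + 4(δ⁺(k⁰,l⁰) + δ⁺(k⁰,l¹) + δ⁺(k¹,l⁰) - δ⁻(k¹,l¹))]. -/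
import Mathlib


open Finset

/-- The correlation `⟨f,g⟩ = Σ_{a,b} W(a,b)(1-2f(a))(1-2g(b))`. -/
noncomputable def corr (n : ℕ) (W : (Fin n → Bool) × (Fin n → Bool) → ℝ)
    (f g : (Fin n → Bool) → Bool) : ℝ :=
  ∑ p : (Fin n → Bool) × (Fin n → Bool),
    W p * (1 - 2 * (if f p.1 then (1 : ℝ) else 0)) *
      (1 - 2 * (if g p.2 then (1 : ℝ) else 0))

/-- The quantity `f^T W g = Σ_{a,b} f(a) W(a,b) g(b)`. -/
noncomputable def fWg (n : ℕ) (W : (Fin n → Bool) × (Fin n → Bool) → ℝ)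
    (f g : (Fin n → Bool) → Bool) : ℝ :=
  ∑ p : (Fin n → Bool) × (Fin n → Bool),
    (if f p.1 then (1 : ℝ) else 0) * W p * (if g p.2 then (1 : ℝ) else 0)

lemma corr_expand (n : ℕ) (W : (Fin n → Bool) × (Fin n → Bool) → ℝ)
    (hA : ∀ a, ∑ b : Fin n → Bool, W (a, b) = (2:ℝ) ^ (-(n:ℤ)))
    (hB : ∀ b, ∑ a : Fin n → Bool, W (a, b) = (2:ℝ) ^ (-(n:ℤ)))
    (f g : (Fin n → Bool) → Bool) :
    corr n W f g = 1
      - 2 * (2:ℝ)^(-(n:ℤ)) * ((univ.filter fun a => f a = true).card : ℝ)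
      - 2 * (2:ℝ)^(-(n:ℤ)) * ((univ.filter fun b => g b = true).card : ℝ)
      + 4 * fWg n W f g := by
  have key : ∀ p : (Fin n → Bool) × (Fin n → Bool),
      W p * (1 - 2 * (if f p.1 then (1 : ℝ) else 0)) * (1 - 2 * (if g p.2 then (1 : ℝ) else 0))
      = W p - 2 * (W p * (if f p.1 then (1:ℝ) else 0)) - 2 * (W p * (if g p.2 then (1:ℝ) else 0))
        + 4 * ((if f p.1 then (1:ℝ) else 0) * W p * (if g p.2 then (1:ℝ) else 0)) := by
    intro p; ring
  have hcard : (Finset.univ : Finset (Fin n → Bool)).card = 2 ^ n := by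
    simp [Fintype.card_fun]
  have hsum1 : ∑ p : (Fin n → Bool) × (Fin n → Bool), W p = 1 := by
    rw [Fintype.sum_prod_type]
    simp only [hA]
    rw [Finset.sum_const, hcard, nsmul_eq_mul]
    push_cast
    rw [← zpow_natCast (2:ℝ) n, ← zpow_add₀ (by norm_num : (2:ℝ) ≠ 0)]
    simp
  have hsumF : ∑ p : (Fin n → Bool) × (Fin n → Bool), W p * (if f p.1 then (1:ℝ) else 0)
      = (2:ℝ)^(-(n:ℤ)) * ((univ.filter fun a => f a = true).card : ℝ) := by
    rw [Fintype.sum_prod_type]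
    have : ∀ a : Fin n → Bool, ∑ b : Fin n → Bool, W (a, b) * (if f a then (1:ℝ) else 0)
        = (2:ℝ)^(-(n:ℤ)) * (if f a then (1:ℝ) else 0) := by
      intro a; rw [← Finset.sum_mul, hA]
    simp only [this]
    rw [← Finset.mul_sum, Finset.sum_boole]
  have hsumG : ∑ p : (Fin n → Bool) × (Fin n → Bool), W p * (if g p.2 then (1:ℝ) else 0)
      = (2:ℝ)^(-(n:ℤ)) * ((univ.filter fun b => g b = true).card : ℝ) := by
    rw [Fintype.sum_prod_type_right]
    have : ∀ b : Fin n → Bool, ∑ a : Fin n → Bool, W (a, b) * (if g b then (1:ℝ) else 0)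
        = (2:ℝ)^(-(n:ℤ)) * (if g b then (1:ℝ) else 0) := by
      intro b; rw [← Finset.sum_mul, hB]
    simp only [this]
    rw [← Finset.mul_sum, Finset.sum_boole]
  unfold corr fWg
  simp only [key]
  rw [Finset.sum_add_distrib, Finset.sum_sub_distrib, Finset.sum_sub_distrib,
    ← Finset.mul_sum, ← Finset.mul_sum, ← Finset.mul_sum, hsum1, hsumF, hsumG]
  ring

lemma corr_negf (n : ℕ) (W : (Fin n → Bool) × (Fin n → Bool) → ℝ)
    (f g : (Fin n → Bool) → Bool) :
    corr n W (fun a => ! f a) g = - corr n W f g := by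
  unfold corr
  rw [← Finset.sum_neg_distrib]
  refine Finset.sum_congr rfl fun p _ => ?_
  cases hf : f p.1 <;> simp [hf] <;> ring

lemma chsh_one_side (n : ℕ)
    (W : Bool → Bool → ((Fin n → Bool) × (Fin n → Bool) → ℝ))
    (hmargA : ∀ x y a, ∑ b : Fin n → Bool, W x y (a, b) = (2 : ℝ) ^ (-(n : ℤ)))
    (hmargB : ∀ x y b, ∑ a : Fin n → Bool, W x y (a, b) = (2 : ℝ) ^ (-(n : ℤ)))
    (δp δm : ℕ → ℕ → ℝ)
    (hbound : ∀ (x y : Bool) (f g : (Fin n → Bool) → Bool),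
      δm ((univ.filter fun a => f a = true).card) ((univ.filter fun b => g b = true).card)
          ≤ fWg n (W x y) f g ∧
        fWg n (W x y) f g ≤
          δp ((univ.filter fun a => f a = true).card) ((univ.filter fun b => g b = true).card))
    (f₀ f₁ g₀ g₁ : (Fin n → Bool) → Bool) :
    corr n (W false false) f₀ g₀ + corr n (W false true) f₀ g₁ +
        corr n (W true false) f₁ g₀ - corr n (W true true) f₁ g₁
      ≤ ⨆ q : Fin (2 ^ n + 1) × Fin (2 ^ n + 1) × Fin (2 ^ n + 1) × Fin (2 ^ n + 1),
          (2 - (((q.1 : ℕ) : ℝ) + ((q.2.2.1 : ℕ) : ℝ)) / (2 : ℝ) ^ ((n : ℤ) - 2) +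
            4 * (δp (q.1 : ℕ) (q.2.2.1 : ℕ) + δp (q.1 : ℕ) (q.2.2.2 : ℕ) +
              δp (q.2.1 : ℕ) (q.2.2.1 : ℕ) - δm (q.2.1 : ℕ) (q.2.2.2 : ℕ))) := by
  have hk : ∀ f : (Fin n → Bool) → Bool, (univ.filter fun a => f a = true).card < 2 ^ n + 1 := by
    intro f
    have := Finset.card_filter_le (univ : Finset (Fin n → Bool)) (fun a => f a = true)
    simp only [Finset.card_univ, Fintype.card_fun, Fintype.card_bool, Fintype.card_fin] at this
    omega
  refine le_trans ?_ (le_ciSup (Set.Finite.bddAbove (Set.finite_range _))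
    ((⟨_, hk f₀⟩, ⟨_, hk f₁⟩, ⟨_, hk g₀⟩, ⟨_, hk g₁⟩) :
      Fin (2 ^ n + 1) × Fin (2 ^ n + 1) × Fin (2 ^ n + 1) × Fin (2 ^ n + 1)))
  simp only
  have hpow4 : 4 * (2:ℝ)^(-(n:ℤ)) * (2:ℝ)^((n:ℤ)-2) = 1 := by
    rw [mul_assoc, ← zpow_add₀ (by norm_num : (2:ℝ) ≠ 0),
      show -(n:ℤ) + ((n:ℤ) - 2) = -2 by ring]
    norm_num
  have hdiv : ∀ x : ℝ, x / (2:ℝ)^((n:ℤ)-2) = 4 * (2:ℝ)^(-(n:ℤ)) * x := by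
    intro x
    rw [div_eq_iff (by positivity : ((2:ℝ)^((n:ℤ)-2)) ≠ 0)]
    calc x = (4 * (2:ℝ)^(-(n:ℤ)) * (2:ℝ)^((n:ℤ)-2)) * x := by rw [hpow4]; ring
      _ = 4 * (2:ℝ)^(-(n:ℤ)) * x * (2:ℝ)^((n:ℤ)-2) := by ring
  rw [corr_expand n _ (hmargA false false) (hmargB false false),
    corr_expand n _ (hmargA false true) (hmargB false true),
    corr_expand n _ (hmargA true false) (hmargB true false),
    corr_expand n _ (hmargA true true) (hmargB true true), hdiv]
  have h00 := hbound false false f₀ g₀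
  have h01 := hbound false true f₀ g₁
  have h10 := hbound true false f₁ g₀
  have h11 := hbound true true f₁ g₁
  linarith [h00.2, h01.2, h10.2, h11.1]


/-- if the wiring distributions `W^{xy}` have uniform marginals and all
quantities `f^T W^{xy} g` are bounded between `δ⁻(k,l)` and `δ⁺(k,l)` (`k = |f⁻¹(1)|`,
`l = |g⁻¹(1)|`), then the CHSH value of any protocol using these wirings is at most
`max_{k⁰,k¹,l⁰,l¹} [2 - (k⁰+l⁰)/2^{n-2} + 4(δ⁺(k⁰,l⁰)+δ⁺(k⁰,l¹)+δ⁺(k¹,l⁰)-δ⁻(k¹,l¹))]`. -/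
theorem chsh_le_delta_bound (n : ℕ)
    (W : Bool → Bool → ((Fin n → Bool) × (Fin n → Bool) → ℝ))
    (hW0 : ∀ x y p, 0 ≤ W x y p)
    (hmargA : ∀ x y a, ∑ b : Fin n → Bool, W x y (a, b) = (2 : ℝ) ^ (-(n : ℤ)))
    (hmargB : ∀ x y b, ∑ a : Fin n → Bool, W x y (a, b) = (2 : ℝ) ^ (-(n : ℤ)))
    (δp δm : ℕ → ℕ → ℝ)
    (hbound : ∀ (x y : Bool) (f g : (Fin n → Bool) → Bool),
      δm ((univ.filter fun a => f a = true).card) ((univ.filter fun b => g b = true).card)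
          ≤ fWg n (W x y) f g ∧
        fWg n (W x y) f g ≤
          δp ((univ.filter fun a => f a = true).card) ((univ.filter fun b => g b = true).card))
    (f₀ f₁ g₀ g₁ : (Fin n → Bool) → Bool) :
    |corr n (W false false) f₀ g₀ + corr n (W false true) f₀ g₁ +
        corr n (W true false) f₁ g₀ - corr n (W true true) f₁ g₁|
      ≤ ⨆ q : Fin (2 ^ n + 1) × Fin (2 ^ n + 1) × Fin (2 ^ n + 1) × Fin (2 ^ n + 1),
          (2 - (((q.1 : ℕ) : ℝ) + ((q.2.2.1 : ℕ) : ℝ)) / (2 : ℝ) ^ ((n : ℤ) - 2) +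
            4 * (δp (q.1 : ℕ) (q.2.2.1 : ℕ) + δp (q.1 : ℕ) (q.2.2.2 : ℕ) +
              δp (q.2.1 : ℕ) (q.2.2.1 : ℕ) - δm (q.2.1 : ℕ) (q.2.2.2 : ℕ))) := by
  rw [abs_le]
  constructor
  · have h := chsh_one_side n W hmargA hmargB δp δm hbound
      (fun a => ! f₀ a) (fun a => ! f₁ a) g₀ g₁
    rw [corr_negf, corr_negf, corr_negf, corr_negf] at h
    linarith
  · exact chsh_one_side n W hmargA hmargB δp δm hbound f₀ f₁ g₀ g₁
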